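/- Let c be a positive integer and set n_k = c^k. Then for μ = e^{2πi/(c+1)} we have sup_{k≥0} |μ^{n_k} - 1| = 2·sin(π/(c+1)). -/

import Mathlib

open Complex Real

lemma abs_exp_mul_I_sub_one' (θ : ℝ) :
    ‖Complex.exp (θ * Complex.I) - 1‖ = 2 * |Real.sin (θ / 2)| := by
  have h : Complex.exp (θ * Complex.I) - 1 =
      Complex.ofReal (Real.cos θ - 1) + Complex.ofReal (Real.sin θ) * Complex.I := by
    rw [Complex.exp_mul_I]
    push_cast
    ring
  rw [h, Complex.norm_add_mul_I, Real.abs_sin_half]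
  rw [show (Real.cos θ - 1) ^ 2 + Real.sin θ ^ 2 = 4 * ((1 - Real.cos θ) / 2) by
    nlinarith [Real.sin_sq_add_cos_sq θ]]
  rw [Real.sqrt_mul (by norm_num : (0:ℝ) ≤ 4),
    show (4:ℝ) = 2 ^ 2 by norm_num, Real.sqrt_sq (by norm_num : (0:ℝ) ≤ 2)]

theorem stmt_1 (c : ℕ) (hc : 0 < c)
    (μ : ℂ) (hμ : μ = Complex.exp (2 * Real.pi * Complex.I / (c + 1))) :
    (⨆ k : ℕ, ‖μ ^ (c ^ k) - 1‖) = 2 * Real.sin (Real.pi / (c + 1)) := by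
  set θ : ℝ := 2 * Real.pi / (c + 1) with hθ
  have hcR : (0:ℝ) < (c:ℝ) + 1 := by positivity
  have hμ' : μ = Complex.exp ((θ : ℂ) * Complex.I) := by
    rw [hμ]
    congr 1
    have : ((c:ℂ) + 1) ≠ 0 := by
      exact_mod_cast Nat.cast_add_one_ne_zero (R := ℂ) c
    push_cast [hθ]
    field_simp
  -- μ^(c+1) = 1
  have hone : μ ^ (c + 1) = 1 := by
    rw [hμ', ← Complex.exp_nat_mul]
    rw [show ((c + 1 : ℕ) : ℂ) * ((θ : ℂ) * Complex.I) = 2 * Real.pi * Complex.I by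
      push_cast [hθ]
      have : ((c:ℂ) + 1) ≠ 0 := by
        exact_mod_cast Nat.cast_add_one_ne_zero (R := ℂ) c
      field_simp]
    exact Complex.exp_two_pi_mul_I
  -- μ^(c^k) is μ or μ^c
  have key : ∀ k : ℕ, μ ^ (c ^ k) = μ ∨ μ ^ (c ^ k) = μ ^ c := by
    intro k
    induction k with
    | zero => left; simp
    | succ k ih =>
      rw [pow_succ, pow_mul]
      rcases ih with h | h
      · right; rw [h]
      · left
        rw [h, ← pow_mul]
        obtain ⟨d, rfl⟩ : ∃ d, c = d + 1 := ⟨c - 1, by omega⟩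
        rw [show (d + 1) * (d + 1) = (d + 1 + 1) * d + 1 by ring, pow_succ, pow_mul,
          hone, one_pow, one_mul]
  -- the value for μ
  have hθpos : 0 < θ := by positivity
  have hπc : Real.pi / (↑c + 1) ≤ Real.pi := by
    rw [div_le_iff₀ hcR]
    nlinarith [Real.pi_pos]
  have hsin_nonneg : 0 ≤ Real.sin (Real.pi / (c + 1)) := by
    apply Real.sin_nonneg_of_nonneg_of_le_pi (by positivity) hπc
  have hval1 : ‖μ - 1‖ = 2 * Real.sin (Real.pi / (c + 1)) := by
    rw [hμ', abs_exp_mul_I_sub_one']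
    rw [show θ / 2 = Real.pi / (c + 1) by rw [hθ]; ring]
    rw [_root_.abs_of_nonneg hsin_nonneg]
  have hval2 : ‖μ ^ c - 1‖ = 2 * Real.sin (Real.pi / (c + 1)) := by
    rw [hμ', ← Complex.exp_nat_mul]
    rw [show ((c:ℂ)) * ((θ:ℂ) * Complex.I) = ((c * θ : ℝ) : ℂ) * Complex.I by push_cast; ring]
    rw [abs_exp_mul_I_sub_one']
    rw [show (c : ℝ) * θ / 2 = Real.pi - Real.pi / (c + 1) by
      rw [hθ]; field_simp; ring]
    rw [Real.sin_pi_sub, _root_.abs_of_nonneg hsin_nonneg]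
  have habs : ∀ k : ℕ, ‖μ ^ (c ^ k) - 1‖ = 2 * Real.sin (Real.pi / (c + 1)) := by
    intro k
    rcases key k with h | h <;> rw [h]
    · exact hval1
    · exact hval2
  calc (⨆ k : ℕ, ‖μ ^ (c ^ k) - 1‖)
      = ⨆ _ : ℕ, 2 * Real.sin (Real.pi / (c + 1)) := iSup_congr habs
    _ = 2 * Real.sin (Real.pi / (c + 1)) := ciSup_const
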